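/- Given any 0 < A₀ < A₁, any 0 < σ < 1 and any p ≥ 2, the set of parameters b ∈ [0,1] for which there are infinitely many pairs of integers 0 < k < n satisfying A₀ < b^{p^k}/σ^{n−k} < A₁ is a dense G_δ subset of [0,1] with full Lebesgue measure. -/

import Mathlib

/-!
Common background definitions for the renormalization theory of (two- and
three-dimensional) Hénon-like maps, following the paper
"Renormalization of Cʳ Hénon maps".

Words in W^n = {v,c}^n are encoded as lists of booleans (`false` = v, `true` = c).
-/

noncomputable section

open Set Filter Metric MeasureTheory Topology

abbrev R3 : Type := ℝ × ℝ × ℝ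
abbrev R2 : Type := ℝ × ℝ

/-- Projection of ℝ³ onto the xy-plane. -/
def pxy (w : R3) : R2 := (w.1, w.2.1)

/-- Jacobian determinant of a self-map of ℝ³. -/
def Jac3 (G : R3 → R3) (w : R3) : ℝ := LinearMap.det (fderiv ℝ G w).toLinearMap

/-- Jacobian determinant of a self-map of ℝ². -/
def Jac2 (G : R2 → R2) (w : R2) : ℝ := LinearMap.det (fderiv ℝ G w).toLinearMap

/-- Minimal distance between two sets: `dist_min(S,T) = inf {dist p q | p ∈ S, q ∈ T}`. -/
def setDist {α : Type} [PseudoMetricSpace α] (S T : Set α) : ℝ :=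
  sInf (Set.image2 dist S T)

open ENNReal



lemma prog_measure (t c δ q a r : ℝ) (ht : 0 < t) (hδ : 0 < δ) (hδt : δ ≤ t)
    (hq : 0 < q) (hr : 0 < r) (hqa : c + t ≤ q * a) (hqr : 3 * t ≤ q * r) :
    ENNReal.ofReal (δ / t * r) ≤
      volume {x : ℝ | x ∈ Set.Ioo a (a + 2*r) ∧
        ∃ m : ℤ, 1 ≤ m ∧ (m:ℝ)*t + c - δ < q*x ∧ q*x < (m:ℝ)*t + c} := by
  set m₁ : ℤ := ⌈(q*a - c + δ)/t⌉ with hm₁def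
  set m₂ : ℤ := ⌊(q*(a+2*r) - c)/t⌋ with hm₂def
  have hm₁ : (q*a - c + δ)/t ≤ (m₁:ℝ) := Int.le_ceil _
  have hm₁' : (m₁:ℝ) < (q*a - c + δ)/t + 1 := Int.ceil_lt_add_one _
  have hm₂ : (m₂:ℝ) ≤ (q*(a+2*r) - c)/t := Int.floor_le _
  have hm₂' : (q*(a+2*r) - c)/t - 1 < (m₂:ℝ) := Int.sub_one_lt_floor _
  have key : (q*a - c + δ)/t + 1 ≤ (q*(a+2*r) - c)/t - 1 := by
    rw [div_add' _ _ _ ht.ne', div_sub' ht.ne', div_le_div_iff₀ ht ht]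
    nlinarith
  have hm₁₂ : (m₁:ℝ) < (m₂:ℝ) := lt_of_lt_of_le hm₁' (le_trans key hm₂'.le)
  have hm₁₂' : m₁ ≤ m₂ := by exact_mod_cast hm₁₂.le
  have h1m₁ : 1 ≤ m₁ := by
    have : (1:ℝ) ≤ (m₁:ℝ) := by
      refine le_trans ?_ hm₁
      rw [le_div_iff₀ ht]; nlinarith
    exact_mod_cast this
  set J : ℤ → Set ℝ := fun m => Set.Ioo (((m:ℝ)*t + c - δ)/q) (((m:ℝ)*t + c)/q) with hJ
  have hsub : ∀ m ∈ Finset.Icc m₁ m₂, J m ⊆ {x : ℝ | x ∈ Set.Ioo a (a + 2*r) ∧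
        ∃ m : ℤ, 1 ≤ m ∧ (m:ℝ)*t + c - δ < q*x ∧ q*x < (m:ℝ)*t + c} := by
    intro m hm x hx
    simp only [Finset.mem_Icc] at hm
    obtain ⟨hx1, hx2⟩ := hx
    have hml : ((m₁:ℝ)) ≤ (m:ℝ) := by exact_mod_cast hm.1
    have hmu : ((m:ℝ)) ≤ (m₂:ℝ) := by exact_mod_cast hm.2
    have hax : a < x := by
      refine lt_of_le_of_lt ?_ hx1
      rw [le_div_iff₀ hq]
      have : q*a - c + δ ≤ (m:ℝ)*t := by
        rw [← div_le_iff₀ ht] ; exact le_trans hm₁ hml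
      linarith
    have hxa : x < a + 2*r := by
      refine lt_of_lt_of_le hx2 ?_
      rw [div_le_iff₀ hq]
      have : (m:ℝ)*t ≤ q*(a+2*r) - c := by
        rw [← le_div_iff₀ ht]; exact le_trans hmu hm₂
      linarith
    refine ⟨⟨hax, hxa⟩, m, le_trans h1m₁ hm.1, ?_, ?_⟩
    · have := (div_lt_iff₀ hq).1 hx1; linarith
    · have := (lt_div_iff₀ hq).1 hx2; linarith
  have hdisj : (↑(Finset.Icc m₁ m₂) : Set ℤ).PairwiseDisjoint J := by
    intro m hm m' hm' hne
    wlog h : m < m' generalizing m m' with H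
    · exact (H hm' hm hne.symm (by omega)).symm
    refine Set.disjoint_left.2 ?_
    rintro x ⟨_, h2⟩ ⟨h3, _⟩
    have hmm : (m:ℝ) + 1 ≤ (m':ℝ) := by exact_mod_cast h
    have : ((m:ℝ)*t + c)/q ≤ ((m':ℝ)*t + c - δ)/q := by
      have h2 : (m:ℝ)*t + c ≤ (m':ℝ)*t + c - δ := by nlinarith
      exact div_le_div_of_nonneg_right h2 hq.le
    exact absurd (lt_trans h3 h2) (not_lt.2 this)
  have hvolJ : ∀ m : ℤ, volume (J m) = ENNReal.ofReal (δ/q) := by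
    intro m
    rw [hJ]
    simp only
    rw [Real.volume_Ioo]
    congr 1
    field_simp
    ring
  have hvol : volume (⋃ m ∈ Finset.Icc m₁ m₂, J m)
      = (Finset.Icc m₁ m₂).card • ENNReal.ofReal (δ/q) := by
    rw [measure_biUnion_finset hdisj (fun m _ => measurableSet_Ioo)]
    rw [Finset.sum_congr rfl (fun m _ => hvolJ m), Finset.sum_const]
  have hcard : ((Finset.Icc m₁ m₂).card : ℝ) = (m₂:ℝ) - m₁ + 1 := by
    rw [Int.card_Icc]
    have h0 : (0:ℤ) ≤ m₂ + 1 - m₁ := by omega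
    have h1 := Int.toNat_of_nonneg h0
    rw [show ((m₂ + 1 - m₁).toNat : ℝ) = (((m₂ + 1 - m₁).toNat : ℤ) : ℝ) from by push_cast; ring,
      h1]
    push_cast
    ring
  have e₂ : q*(a+2*r) - c - t < (m₂:ℝ)*t := by
    have : (q*(a+2*r) - c)/t < (m₂:ℝ) + 1 := by linarith
    have := (div_lt_iff₀ ht).1 this
    nlinarith
  have e₁ : (m₁:ℝ)*t < q*a - c + δ + t := by
    have h7 : ((m₁:ℝ) - 1) < (q*a - c + δ)/t := by linarith
    have := (lt_div_iff₀ ht).1 h7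
    nlinarith
  have h6 : q*r ≤ ((m₂:ℝ) - m₁ + 1)*t := by nlinarith [e₁, e₂, hqr, hδt]
  have hfin : δ/t*r ≤ ((Finset.Icc m₁ m₂).card : ℝ) * (δ/q) := by
    rw [hcard, div_mul_eq_mul_div, mul_div_assoc', div_le_div_iff₀ ht hq]
    nlinarith [mul_le_mul_of_nonneg_left h6 hδ.le]
  calc ENNReal.ofReal (δ/t*r) ≤ ENNReal.ofReal (((Finset.Icc m₁ m₂).card : ℝ)*(δ/q)) :=
        ENNReal.ofReal_le_ofReal hfin
    _ = (Finset.Icc m₁ m₂).card • ENNReal.ofReal (δ/q) := by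
        rw [ENNReal.ofReal_mul (by positivity), ENNReal.ofReal_natCast, nsmul_eq_mul]
    _ = volume (⋃ m ∈ Finset.Icc m₁ m₂, J m) := hvol.symm
    _ ≤ _ := measure_mono (Set.iUnion₂_subset hsub)


lemma badset_null (t c δ p : ℝ) (ht : 0 < t) (hδ : 0 < δ) (hδt : δ ≤ t) (hp : 2 ≤ p) (K : ℕ) :
    volume {x : ℝ | 0 < x ∧ ∀ k, K ≤ k → ¬ ∃ m : ℤ, 1 ≤ m ∧
      (m:ℝ)*t + c - δ < p^k*x ∧ p^k*x < (m:ℝ)*t + c} = 0 := by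
  set E := {x : ℝ | 0 < x ∧ ∀ k, K ≤ k → ¬ ∃ m : ℤ, 1 ≤ m ∧
      (m:ℝ)*t + c - δ < p^k*x ∧ p^k*x < (m:ℝ)*t + c} with hE
  have hEm : MeasurableSet E := by
    have : E = Set.Ioi 0 ∩ ⋂ k, ⋂ (_ : K ≤ k),
        (⋃ m : ℤ, ⋃ (_ : (1:ℤ) ≤ m),
          (fun x : ℝ => p^k*x) ⁻¹' Set.Ioo ((m:ℝ)*t + c - δ) ((m:ℝ)*t + c))ᶜ := by
      ext x
      simp only [hE, Set.mem_setOf_eq, Set.mem_inter_iff, Set.mem_Ioi, Set.mem_iInter,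
        Set.mem_compl_iff, Set.mem_iUnion, Set.mem_preimage, Set.mem_Ioo]
      aesop
    rw [this]
    refine measurableSet_Ioi.inter (MeasurableSet.iInter fun k => MeasurableSet.iInter fun _ =>
      (MeasurableSet.iUnion fun m => MeasurableSet.iUnion fun _ =>
        measurableSet_Ioo.preimage (measurable_const_mul _)).compl)
  by_contra hne
  have hae := Besicovitch.ae_tendsto_measure_inter_div_of_measurableSet volume hEm
  obtain ⟨x₀, hx₀E, hP⟩ : ∃ x ∈ E, Tendsto
      (fun r => volume (E ∩ closedBall x r) / volume (closedBall x r)) (𝓝[>] 0)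
      (𝓝 (E.indicator 1 x)) := by
    by_contra h
    push_neg at h
    refine hne (measure_mono_null (fun x hx => ?_) (ae_iff.1 hae))
    exact h x hx
  have hx₀pos : 0 < x₀ := hx₀E.1
  have hind : E.indicator (1 : ℝ → ℝ≥0∞) x₀ = 1 := by
    rw [Set.indicator_of_mem hx₀E]; rfl
  rw [hind] at hP
  set d : ℝ := δ / t with hd
  have hd0 : 0 < d := div_pos hδ ht
  have hd1 : d ≤ 1 := (div_le_one ht).2 hδt
  have hlt1 : ENNReal.ofReal (1 - d/8) < 1 := ENNReal.ofReal_lt_one.2 (by linarith)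
  have hev := hP.eventually (eventually_gt_nhds hlt1)
  have hIoo : Set.Ioo (0:ℝ) (x₀/2) ∈ 𝓝[>] (0:ℝ) :=
    Ioo_mem_nhdsGT_of_mem ⟨le_refl 0, half_pos hx₀pos⟩
  obtain ⟨r, hratio, hr0, hrx⟩ := (hev.and (eventually_of_mem hIoo fun y hy => hy)).exists
  have har : 0 < x₀ - r := by linarith [hrx, hx₀pos]
  obtain ⟨k, hkK, hk1, hk2⟩ : ∃ k, K ≤ k ∧ c + t ≤ p^k*(x₀ - r) ∧ 3*t ≤ p^k*r := by
    have hq := tendsto_pow_atTop_atTop_of_one_lt (lt_of_lt_of_le (by norm_num : (1:ℝ) < 2) hp)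
    obtain ⟨k, hk, h1k, h2k⟩ := ((eventually_ge_atTop K).and
      ((hq.eventually_ge_atTop ((c+t)/(x₀ - r))).and
        (hq.eventually_ge_atTop ((3*t)/r)))).exists
    exact ⟨k, hk, (div_le_iff₀ har).1 h1k, (div_le_iff₀ hr0).1 h2k⟩
  have hqpos : (0:ℝ) < p^k := pow_pos (by linarith) k
  have hkey := prog_measure t c δ (p^k) (x₀ - r) r ht hδ hδt hqpos hr0 hk1 hk2
  set G := {x : ℝ | x ∈ Set.Ioo (x₀ - r) (x₀ - r + 2*r) ∧
      ∃ m : ℤ, 1 ≤ m ∧ (m:ℝ)*t + c - δ < p^k*x ∧ p^k*x < (m:ℝ)*t + c} with hG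
  have hGsub : G ⊆ closedBall x₀ r \ E := by
    rintro x ⟨⟨hx1, hx2⟩, m, hm, h1, h2⟩
    constructor
    · rw [Real.closedBall_eq_Icc]
      constructor <;> [linarith; linarith]
    · intro hxE
      exact hxE.2 k hkK ⟨m, hm, h1, h2⟩
  have hdiff : ENNReal.ofReal (d * r) ≤ volume (closedBall x₀ r \ E) := by
    refine le_trans ?_ (measure_mono hGsub)
    rw [hd]
    exact hkey
  have hcb : volume (closedBall x₀ r) = ENNReal.ofReal (2*r) := Real.volume_closedBall x₀ r
  have hcbne : volume (closedBall x₀ r) ≠ 0 := by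
    rw [hcb]; simp [ENNReal.ofReal_eq_zero]; linarith
  have hcbtop : volume (closedBall x₀ r) ≠ ⊤ := by rw [hcb]; exact ENNReal.ofReal_ne_top
  have hmul : ENNReal.ofReal (1 - d/8) * volume (closedBall x₀ r) < volume (E ∩ closedBall x₀ r) :=
    (ENNReal.lt_div_iff_mul_lt (Or.inl hcbne) (Or.inl hcbtop)).1 hratio
  have hsum : volume (E ∩ closedBall x₀ r) + volume (closedBall x₀ r \ E) ≤
      volume (closedBall x₀ r) := by
    rw [Set.inter_comm]
    rw [measure_inter_add_diff _ hEm]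
  have hbig : ENNReal.ofReal ((1 - d/8)*(2*r) + d*r) < ENNReal.ofReal (2*r) := by
    calc ENNReal.ofReal ((1 - d/8)*(2*r) + d*r)
        = ENNReal.ofReal ((1 - d/8)*(2*r)) + ENNReal.ofReal (d*r) := by
          rw [ENNReal.ofReal_add (by nlinarith) (by positivity)]
      _ = ENNReal.ofReal (1 - d/8) * volume (closedBall x₀ r) + ENNReal.ofReal (d*r) := by
          rw [hcb, ENNReal.ofReal_mul (by linarith)]
      _ < volume (E ∩ closedBall x₀ r) + ENNReal.ofReal (d*r) := by
          exact ENNReal.add_lt_add_right ENNReal.ofReal_ne_top hmul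
      _ ≤ volume (E ∩ closedBall x₀ r) + volume (closedBall x₀ r \ E) :=
          add_le_add_right hdiff _
      _ ≤ volume (closedBall x₀ r) := hsum
      _ = ENNReal.ofReal (2*r) := hcb
  have := (ENNReal.ofReal_lt_ofReal_iff (by linarith)).1 hbig
  nlinarith


lemma bad_all_null (t c δ p : ℝ) (ht : 0 < t) (hδ : 0 < δ) (hδt : δ ≤ t) (hp : 2 ≤ p) :
    volume {x : ℝ | 0 < x ∧ ∃ K : ℕ, ∀ k, K ≤ k → ¬ ∃ m : ℤ, 1 ≤ m ∧
      (m:ℝ)*t + c - δ < p^k*x ∧ p^k*x < (m:ℝ)*t + c} = 0 := by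
  apply measure_mono_null (?_ : _ ⊆ ⋃ K : ℕ, {x : ℝ | 0 < x ∧ ∀ k, K ≤ k → ¬ ∃ m : ℤ, 1 ≤ m ∧
      (m:ℝ)*t + c - δ < p^k*x ∧ p^k*x < (m:ℝ)*t + c})
  · exact measure_iUnion_null fun K => badset_null t c δ p ht hδ hδt hp K
  · rintro x ⟨hx, K, hK⟩
    exact Set.mem_iUnion.2 ⟨K, hx, hK⟩

lemma infinite_of_unbounded {P : Set (ℕ × ℕ)} (f : ℕ × ℕ → ℕ)
    (h : ∀ N, ∃ q ∈ P, N < f q) : P.Infinite := by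
  by_contra hninf
  have hfin : P.Finite := Set.not_infinite.1 hninf
  obtain ⟨N, hN⟩ := (hfin.image f).bddAbove
  obtain ⟨q, hq, hlt⟩ := h N
  exact absurd (hN (Set.mem_image_of_mem f hq)) (not_le.2 hlt)

lemma exp_neg_lipschitz : LipschitzOnWith 1 (fun x : ℝ => Real.exp (-x)) (Set.Ici 0) := by
  rw [lipschitzOnWith_iff_dist_le_mul]
  intro x hx y hy
  rw [NNReal.coe_one, one_mul, Real.dist_eq, Real.dist_eq]
  wlog h : y ≤ x generalizing x y
  · rw [abs_sub_comm, abs_sub_comm x y]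
    exact this y hy x hx (le_of_not_ge h)
  have hy0 : (0:ℝ) ≤ y := hy
  have hkey : Real.exp (-y) - Real.exp (-x) ≤ x - y := by
    have e1 : Real.exp (-y) ≤ 1 := Real.exp_le_one_iff.2 (by linarith)
    have e2 : -(x - y) + 1 ≤ Real.exp (-(x-y)) := Real.add_one_le_exp _
    have e3 : Real.exp (-x) = Real.exp (-y) * Real.exp (-(x-y)) := by
      rw [← Real.exp_add]; ring_nf
    nlinarith [Real.exp_pos (-(x-y)), Real.exp_pos (-y)]
  have hmono : Real.exp (-x) ≤ Real.exp (-y) := Real.exp_le_exp.2 (by linarith)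
  rw [abs_of_nonpos (by linarith), abs_of_nonneg (by linarith)]
  linarith

/-- **A dense Gδ set of full measure in the parameter space.** Given any
`0 < A₀ < A₁`, `0 < σ < 1` and `p ≥ 2`, the set of parameters `b ∈ [0,1]` for which
there are infinitely many pairs `0 < k < n` satisfying `A₀ < b^{p^k}/σ^{n-k} < A₁` is
a dense Gδ subset of `[0,1]` with full Lebesgue measure. -/
theorem dense_gdelta_full_measure (A₀ A₁ σ p : ℝ)
    (hA₀ : 0 < A₀) (hA : A₀ < A₁) (hσ : σ ∈ Set.Ioo (0:ℝ) 1) (hp : 2 ≤ p)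
    (S : Set ℝ)
    (hS : S = {b ∈ Set.Icc (0:ℝ) 1 |
      {kn : ℕ × ℕ | 0 < kn.1 ∧ kn.1 < kn.2 ∧
        A₀ < Real.rpow b (p ^ kn.1) / σ ^ (kn.2 - kn.1) ∧
        Real.rpow b (p ^ kn.1) / σ ^ (kn.2 - kn.1) < A₁}.Infinite}) :
    (∃ T : Set ℝ, IsGδ T ∧ S = T ∩ Set.Icc (0:ℝ) 1) ∧
    Set.Icc (0:ℝ) 1 ⊆ closure S ∧
    volume (Set.Icc (0:ℝ) 1 \ S) = 0 := by
  obtain ⟨hσ0, hσ1⟩ := hσ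
  have hp0 : (0:ℝ) < p := by linarith
  -- Part 1 : Gδ
  set U : ℕ × ℕ → Set ℝ := fun kn => {b : ℝ | A₀ < Real.rpow b (p ^ kn.1) / σ ^ (kn.2 - kn.1) ∧
      Real.rpow b (p ^ kn.1) / σ ^ (kn.2 - kn.1) < A₁} with hU
  have hUopen : ∀ kn, IsOpen (U kn) := by
    intro kn
    have hc : Continuous fun b : ℝ => Real.rpow b (p ^ kn.1) / σ ^ (kn.2 - kn.1) :=
      (Real.continuous_rpow_const (pow_nonneg hp0.le _)).div_const _
    have : U kn = (fun b : ℝ => Real.rpow b (p ^ kn.1) / σ ^ (kn.2 - kn.1)) ⁻¹' Set.Ioo A₀ A₁ := by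
      ext b; simp [hU, Set.mem_Ioo]
    rw [this]; exact isOpen_Ioo.preimage hc
  set T : Set ℝ := ⋂ N : ℕ, ⋃ kn : ℕ × ℕ, ⋃ (_ : 0 < kn.1 ∧ kn.1 < kn.2 ∧ N < kn.2), U kn with hT
  have hST : S = T ∩ Set.Icc 0 1 := by
    rw [hS]; ext b
    simp only [Set.mem_setOf_eq, Set.mem_inter_iff, hT, Set.mem_iInter, Set.mem_iUnion]
    constructor
    · rintro ⟨hb, hinf⟩
      refine ⟨fun N => ?_, hb⟩
      by_contra h
      push_neg at h
      apply hinf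
      apply Set.Finite.subset ((Set.finite_Iio (N+1)).prod (Set.finite_Iio (N+1)))
      rintro ⟨k, n⟩ ⟨hk, hkn, h1, h2⟩
      have hn : n ≤ N := by
        by_contra hn
        exact (h (k, n) ⟨hk, hkn, by omega⟩) ⟨h1, h2⟩
      exact ⟨by simp; omega, by simp; omega⟩
    · rintro ⟨hTmem, hb⟩
      refine ⟨hb, infinite_of_unbounded Prod.snd fun N => ?_⟩
      obtain ⟨kn, hcond, hUmem⟩ := hTmem N
      exact ⟨kn, ⟨hcond.1, hcond.2.1, hUmem.1, hUmem.2⟩, hcond.2.2⟩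
  -- Part 3 : measure
  set t : ℝ := -Real.log σ with htdef
  set c : ℝ := -Real.log A₀ with hcdef
  set δ : ℝ := min (Real.log A₁ - Real.log A₀) t with hδdef
  have ht : 0 < t := by
    rw [htdef, neg_pos]; exact Real.log_neg hσ0 hσ1
  have hδpos : 0 < δ := lt_min (by
    rw [sub_pos]; exact Real.log_lt_log hA₀ hA) ht
  have hδt : δ ≤ t := min_le_right _ _
  have hgood : ∀ x : ℝ, 0 < x → (∀ K : ℕ, ∃ k, K ≤ k ∧ ∃ m : ℤ, 1 ≤ m ∧
      (m:ℝ)*t + c - δ < p^k*x ∧ p^k*x < (m:ℝ)*t + c) → Real.exp (-x) ∈ S := by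
    intro x hx hcond
    rw [hS]
    have hb0 : 0 < Real.exp (-x) := Real.exp_pos _
    have hb1 : Real.exp (-x) ≤ 1 := Real.exp_le_one_iff.2 (by linarith)
    refine ⟨⟨hb0.le, hb1⟩, infinite_of_unbounded Prod.fst fun N => ?_⟩
    obtain ⟨k, hkN, m, hm, h1, h2⟩ := hcond (N+1)
    have hm0 : (0:ℤ) ≤ m := by omega
    have hmt : (m.toNat : ℝ) = (m : ℝ) := by exact_mod_cast Int.toNat_of_nonneg hm0
    have hM1 : 1 ≤ m.toNat := by omega
    have hsubnat : (k + m.toNat) - k = m.toNat := by omega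
    have hσM : (0:ℝ) < σ ^ m.toNat := pow_pos hσ0 _
    have hrpow : Real.rpow (Real.exp (-x)) (p ^ k) = Real.exp (-(x * p^k)) := by
      rw [show Real.rpow (Real.exp (-x)) (p ^ k) = (Real.exp (-x)) ^ ((p:ℝ) ^ k : ℝ) from rfl,
        Real.rpow_def_of_pos hb0, Real.log_exp]; ring_nf
    have hlogσ : Real.log (σ ^ m.toNat) = (m.toNat : ℝ) * Real.log σ := Real.log_pow _ _
    have hA₀σ : A₀ * σ ^ m.toNat = Real.exp (Real.log A₀ + (m.toNat:ℝ) * Real.log σ) := by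
      rw [Real.exp_add, Real.exp_log hA₀, ← hlogσ, Real.exp_log hσM]
    have hA₁σ : A₁ * σ ^ m.toNat = Real.exp (Real.log A₁ + (m.toNat:ℝ) * Real.log σ) := by
      rw [Real.exp_add, Real.exp_log (lt_trans hA₀ hA), ← hlogσ, Real.exp_log hσM]
    have hδA : δ ≤ Real.log A₁ - Real.log A₀ := min_le_left _ _
    refine ⟨(k, k + m.toNat), ⟨by omega, by omega, ?_, ?_⟩, by simp; omega⟩
    · -- A₀ < rpow / σ^M
      simp only [hsubnat]
      rw [lt_div_iff₀ hσM, hrpow, hA₀σ]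
      apply Real.exp_lt_exp.2
      rw [hmt]
      have : (m:ℝ) * t + c = -(Real.log A₀ + (m:ℝ) * Real.log σ) := by
        rw [htdef, hcdef]; ring
      nlinarith [h2]
    · simp only [hsubnat]
      rw [div_lt_iff₀ hσM, hrpow, hA₁σ]
      apply Real.exp_lt_exp.2
      rw [hmt]
      have : (m:ℝ) * t + c - δ = -(Real.log A₀ + δ + (m:ℝ) * Real.log σ) := by
        rw [htdef, hcdef]; ring
      nlinarith [h1]
  set badX : Set ℝ := {x : ℝ | 0 < x ∧ ∃ K : ℕ, ∀ k, K ≤ k → ¬ ∃ m : ℤ, 1 ≤ m ∧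
      (m:ℝ)*t + c - δ < p^k*x ∧ p^k*x < (m:ℝ)*t + c} with hbadX
  have hnull : volume badX = 0 := bad_all_null t c δ p ht hδpos hδt hp
  have himg : Set.Icc (0:ℝ) 1 \ S ⊆ {(0:ℝ), 1} ∪ (fun x => Real.exp (-x)) '' badX := by
    rintro b ⟨⟨hb0, hb1⟩, hbS⟩
    rcases eq_or_lt_of_le hb0 with h0 | h0
    · exact Or.inl (Or.inl h0.symm)
    rcases eq_or_lt_of_le hb1 with h1 | h1
    · exact Or.inl (Or.inr h1)
    right
    have hlogb : Real.log b < 0 := Real.log_neg h0 h1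
    refine ⟨-Real.log b, ⟨by linarith, ?_⟩, by show Real.exp (-(-Real.log b)) = b; rw [neg_neg, Real.exp_log h0]⟩
    by_contra hcontra
    have hforall : ∀ K : ℕ, ∃ k, K ≤ k ∧ ∃ m : ℤ, 1 ≤ m ∧
        (m:ℝ)*t + c - δ < p^k*(-Real.log b) ∧ p^k*(-Real.log b) < (m:ℝ)*t + c := by
      intro K
      by_contra hK
      push_neg at hK
      refine hcontra ⟨K, fun k hk => ?_⟩
      rintro ⟨m, hm, ha, hb'⟩
      exact absurd hb' (not_lt.2 (hK k hk m hm ha))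
    have := hgood (-Real.log b) (by linarith) hforall
    rw [neg_neg, Real.exp_log h0] at this
    exact hbS this
  have himgnull : volume ((fun x => Real.exp (-x)) '' badX) = 0 := by
    have hsub : badX ⊆ Set.Ici (0:ℝ) := fun x hx => hx.1.le
    have hle := (exp_neg_lipschitz.mono hsub).hausdorffMeasure_image_le (zero_le_one)
    rw [MeasureTheory.hausdorffMeasure_real] at hle
    simp only [hnull, mul_zero, le_zero_iff, ENNReal.coe_one, one_rpow, one_mul] at hle
    exact hle
  have hmeasure : volume (Set.Icc (0:ℝ) 1 \ S) = 0 := by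
    refine measure_mono_null himg (measure_union_null ?_ himgnull)
    exact Set.Finite.measure_zero ((Set.finite_singleton 1).insert 0) volume
  -- Part 2 : closure from full measure
  have hclosure : Set.Icc (0:ℝ) 1 ⊆ closure S := by
    intro x hx
    rw [Metric.mem_closure_iff]
    intro ε hε
    set u : ℝ := max 0 (x - ε/2) with hu
    set v : ℝ := min 1 (x + ε/2) with hv
    have huv : u < v := by
      rcases hx with ⟨hx0, hx1⟩
      rw [hu, hv]
      apply max_lt <;> apply lt_min
      all_goals linarith
    have hsubI : Set.Ioo u v ⊆ Set.Icc (0:ℝ) 1 := fun y hy =>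
      ⟨le_trans (le_max_left _ _) hy.1.le, le_trans hy.2.le (min_le_left _ _)⟩
    have hpos : 0 < volume (Set.Ioo u v) := by
      rw [Real.volume_Ioo]; exact ENNReal.ofReal_pos.2 (by linarith)
    have hne : (Set.Ioo u v ∩ S).Nonempty := by
      by_contra hcon
      rw [Set.not_nonempty_iff_eq_empty] at hcon
      have : Set.Ioo u v ⊆ Set.Icc (0:ℝ) 1 \ S := fun y hy =>
        ⟨hsubI hy, fun hyS => Set.eq_empty_iff_forall_notMem.1 hcon y ⟨hy, hyS⟩⟩
      exact absurd (measure_mono_null this hmeasure) (ne_of_gt hpos)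
    obtain ⟨y, hyI, hyS⟩ := hne
    refine ⟨y, hyS, ?_⟩
    rw [Real.dist_eq, abs_lt]
    have h1 : x - ε/2 ≤ u := le_max_right _ _
    have h2 : v ≤ x + ε/2 := min_le_right _ _
    constructor <;> [linarith [hyI.2]; linarith [hyI.1]]
  exact ⟨⟨T, IsGδ.iInter_of_isOpen fun N => isOpen_iUnion fun kn => isOpen_iUnion fun _ =>
    hUopen kn, hST⟩, hclosure, hmeasure⟩
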